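/- If a flow ψ on a closed Riemannian manifold P has a periodic orbit and possesses a generalized symmetry R with |ρ_ψ(R)| ≠ 1, then ψ has an equilibrium point (a zero of its generating vector field). -/

import Mathlib

open Manifold

/-- Two limits of a nontrivial filter that both lie in the source of a partial homeomorphism
into a Hausdorff space must coincide (local Hausdorffness). -/
lemma aux_local_t2_unique {P H : Type*} [TopologicalSpace P] [TopologicalSpace H] [T2Space H]
    (e : OpenPartialHomeomorph P H) {q q' : P} (hq : q ∈ e.source) (hq' : q' ∈ e.source)
    (F : Filter P) [F.NeBot] (h1 : F ≤ nhds q) (h2 : F ≤ nhds q') : q = q' := by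
  by_contra hne
  have him : e q ≠ e q' := fun h => hne (e.injOn hq hq' h)
  obtain ⟨V, V', hV, hV', hqV, hq'V', hd⟩ := t2_separation him
  have hA : IsOpen (e.source ∩ e ⁻¹' V) := e.isOpen_inter_preimage hV
  have hA' : IsOpen (e.source ∩ e ⁻¹' V') := e.isOpen_inter_preimage hV'
  have hAF : e.source ∩ e ⁻¹' V ∈ F := h1 (hA.mem_nhds ⟨hq, hqV⟩)
  have hA'F : e.source ∩ e ⁻¹' V' ∈ F := h2 (hA'.mem_nhds ⟨hq', hq'V'⟩)
  have : (e.source ∩ e ⁻¹' V) ∩ (e.source ∩ e ⁻¹' V') ∈ F := Filter.inter_mem hAF hA'F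
  have hempty : (e.source ∩ e ⁻¹' V) ∩ (e.source ∩ e ⁻¹' V') = ∅ := by
    ext p
    simp only [Set.mem_inter_iff, Set.mem_preimage, Set.mem_empty_iff_false, iff_false]
    rintro ⟨⟨-, hpV⟩, -, hpV'⟩
    exact Set.disjoint_iff.1 hd ⟨hpV, hpV'⟩ 
  rw [hempty] at this
  exact Filter.empty_notMem F this

/-- If a flow `ψ` on a closed Riemannian manifold has a (non-stationary)
periodic orbit and possesses a generalized symmetry `R` with multiplier `μ`, `|μ| ∉ {0, 1}`,
then `ψ` has an equilibrium point, i.e. a zero of its generating vector field. -/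
theorem periodic_orbit_and_nontrivial_symmetry_implies_equilibrium
    {n : ℕ} {P : Type*} [TopologicalSpace P] [CompactSpace P]
    [ChartedSpace (EuclideanSpace ℝ (Fin n)) P]
    [IsManifold (𝓡 n) (⊤ : ℕ∞) P]
    (ψ : ℝ → P → P)
    (hψ0 : ψ 0 = id)
    (hψadd : ∀ s t : ℝ, ψ (s + t) = ψ s ∘ ψ t)
    (hψsmooth : ContMDiff (𝓘(ℝ, ℝ).prod (𝓡 n)) (𝓡 n) (⊤ : ℕ∞) (fun q : ℝ × P => ψ q.1 q.2))
    (X : P → EuclideanSpace ℝ (Fin n))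
    (hX : ∀ p : P, mfderiv 𝓘(ℝ, ℝ) (𝓡 n) (fun t : ℝ => ψ t p) 0 (1 : ℝ) = X p)
    (R : Diffeomorph (𝓡 n) (𝓡 n) P P (⊤ : ℕ∞)) (μ : ℝ) (hμ0 : μ ≠ 0) (hμ1 : |μ| ≠ 1)
    (hR : ∀ (t : ℝ) (p : P), R (ψ t p) = ψ (μ * t) (R p))
    -- ψ has a periodic orbit (through a non-equilibrium point)
    (p₀ : P) (T₀ : ℝ) (hT₀ : 0 < T₀) (hper : ψ T₀ p₀ = p₀)
    (hnonstat : ∃ t : ℝ, ψ t p₀ ≠ p₀) :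
    ∃ p : P, X p = 0 := by
  have hcomp : ∀ (s t : ℝ) (p : P), ψ s (ψ t p) = ψ (s + t) p := by
    intro s t p; rw [hψadd]; rfl
  have hid : ∀ p : P, ψ 0 p = p := fun p => congrFun hψ0 p
  -- negation of periods
  have hneg : ∀ (T : ℝ) (p : P), ψ T p = p → ψ (-T) p = p := by
    intro T p h
    have : ψ (-T) (ψ T p) = ψ (-T) p := by rw [h]
    rw [hcomp, neg_add_cancel, hid] at this
    exact this.symm
  have habs : ∀ (T : ℝ) (p : P), ψ T p = p → ψ |T| p = p := by
    intro T p h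
    rcases abs_choice T with hc | hc <;> rw [hc]
    · exact h
    · exact hneg T p h
  -- natural multiples of periods
  have hnat : ∀ (k : ℕ) (T : ℝ) (p : P), ψ T p = p → ψ (k * T) p = p := by
    intro k T p h
    induction k with
    | zero => simpa using hid p
    | succ k ih =>
        have : ((k : ℝ) + 1) * T = (k : ℝ) * T + T := by ring
        push_cast
        rw [this, ← hcomp, h, ih]
  -- integer multiples of periods
  have hint : ∀ (k : ℤ) (T : ℝ) (p : P), ψ T p = p → ψ (k * T) p = p := by
    intro k T p h
    rcases Int.natAbs_eq k with hk | hk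
    · rw [hk, Int.cast_natCast]; exact hnat k.natAbs T p h
    · rw [hk, Int.cast_neg, Int.cast_natCast, neg_mul]
      exact hneg _ p (hnat k.natAbs T p h)
  -- construct a contracting symmetry
  obtain ⟨ν, S, hν0, hν1, hS⟩ :
      ∃ (ν : ℝ) (S : P → P), 0 < ν ∧ ν < 1 ∧
        ∀ (T : ℝ) (p : P), 0 < T → ψ T p = p → ψ (ν * T) (S p) = S p := by
    rcases lt_or_gt_of_ne hμ1 with hlt | hgt
    · refine ⟨|μ|, R, abs_pos.2 hμ0, hlt, fun T p hT h => ?_⟩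
      have h1 : ψ (μ * T) (R p) = R p := by rw [← hR, h]
      have : |μ * T| = |μ| * T := by rw [abs_mul, abs_of_pos hT]
      rw [← this]
      exact habs _ _ h1
    · refine ⟨|μ|⁻¹, R.symm, inv_pos.2 (abs_pos.2 hμ0), (inv_lt_one₀ (lt_trans one_pos hgt)).2 hgt, fun T p hT h => ?_⟩
      have h1 : R (ψ (T / μ) (R.symm p)) = ψ T p := by
        rw [hR, mul_div_cancel₀ _ hμ0, R.apply_symm_apply]
      have h2 : ψ (T / μ) (R.symm p) = R.symm p :=
        R.toEquiv.injective (h1.trans (h.trans (R.apply_symm_apply p).symm))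
      have : |T / μ| = |μ|⁻¹ * T := by
        rw [abs_div, abs_of_pos hT, div_eq_inv_mul]
      rw [← this]
      exact habs _ _ h2
  -- the sequence of periodic points with shrinking periods
  set pseq : ℕ → P := fun k => S^[k] p₀ with hpseq
  set Tn : ℕ → ℝ := fun k => ν ^ k * T₀ with hTn
  have hTpos : ∀ k, 0 < Tn k := fun k => mul_pos (pow_pos hν0 k) hT₀
  have hperk : ∀ k, ψ (Tn k) (pseq k) = pseq k := by
    intro k
    induction k with
    | zero => simpa [hpseq, hTn] using hper
    | succ k ih =>
        have : pseq (k + 1) = S (pseq k) := by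
          simp [hpseq, Function.iterate_succ_apply']
        rw [this]
        have h2 := hS (Tn k) (pseq k) (hTpos k) ih
        have : Tn (k + 1) = ν * Tn k := by simp [hTn]; ring
        rw [this]
        exact h2
  have hT0lim : Filter.Tendsto Tn Filter.atTop (nhds 0) := by
    have := (tendsto_pow_atTop_nhds_zero_of_lt_one hν0.le hν1).mul_const T₀
    simpa [hTn] using this
  -- compactness: cluster point via ultrafilter
  set 𝒰 : Ultrafilter ℕ := Ultrafilter.of Filter.atTop with h𝒰
  have hle : (𝒰 : Filter ℕ) ≤ Filter.atTop := Ultrafilter.of_le _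
  obtain ⟨q, -, hq⟩ :=
    isCompact_univ.ultrafilter_le_nhds (𝒰.map pseq) (by simp)
  have hq : Filter.Tendsto pseq (𝒰 : Filter ℕ) (nhds q) := hq
  have hc : Continuous fun z : ℝ × P => ψ z.1 z.2 := hψsmooth.continuous
  -- the key fixed point property, for t with ψ t q in the chart at q
  have hfix : ∀ t : ℝ, ψ t q ∈ (chartAt (EuclideanSpace ℝ (Fin n)) q).source → ψ t q = q := by
    intro t ht
    set r : ℕ → ℝ := fun k => Int.fract (t / Tn k) * Tn k with hrdef
    have hkey : ∀ k, ψ t (pseq k) = ψ (r k) (pseq k) := by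
      intro k
      have hsplit : t = r k + (⌊t / Tn k⌋ : ℝ) * Tn k := by
        have h1 : Int.fract (t / Tn k) + (⌊t / Tn k⌋ : ℝ) = t / Tn k := Int.fract_add_floor _
        have h2 : (Int.fract (t / Tn k) + (⌊t / Tn k⌋ : ℝ)) * Tn k = t := by
          rw [h1]; exact div_mul_cancel₀ t (hTpos k).ne'
        rw [hrdef]
        linear_combination -h2
      rw [hsplit, ← hcomp, hint _ _ _ (hperk k)]
    have hr0 : Filter.Tendsto r Filter.atTop (nhds 0) := by
      apply squeeze_zero (fun k => mul_nonneg (Int.fract_nonneg _) (hTpos k).le)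
        (g := Tn) (fun k => ?_) hT0lim
      calc Int.fract (t / Tn k) * Tn k ≤ 1 * Tn k := by
            exact mul_le_mul_of_nonneg_right (Int.fract_lt_one _).le (hTpos k).le
        _ = Tn k := one_mul _
    have hr0' : Filter.Tendsto r (𝒰 : Filter ℕ) (nhds 0) := hr0.mono_left hle
    have t1 : Filter.Tendsto (fun k => ψ (r k) (pseq k)) (𝒰 : Filter ℕ) (nhds q) := by
      have : Filter.Tendsto (fun k => ((r k, pseq k) : ℝ × P)) (𝒰 : Filter ℕ)
          (nhds ((0 : ℝ), q)) := hr0'.prodMk_nhds hq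
      have := (hc.tendsto ((0 : ℝ), q)).comp this
      simpa [hid, Function.comp_def] using this
    have t2 : Filter.Tendsto (fun k => ψ (r k) (pseq k)) (𝒰 : Filter ℕ) (nhds (ψ t q)) := by
      have : Filter.Tendsto (fun k => ((t, pseq k) : ℝ × P)) (𝒰 : Filter ℕ)
          (nhds ((t : ℝ), q)) := tendsto_const_nhds.prodMk_nhds hq
      have h3 := (hc.tendsto ((t : ℝ), q)).comp this
      refine Filter.Tendsto.congr (fun k => ?_) h3
      exact hkey k
    exact (aux_local_t2_unique (chartAt (EuclideanSpace ℝ (Fin n)) q)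
      ht (mem_chart_source _ q)
      (Filter.map (fun k => ψ (r k) (pseq k)) (𝒰 : Filter ℕ)) t2 t1).symm ▸ rfl
  -- conclude: the flow through q is locally constant at 0
  refine ⟨q, ?_⟩
  have hcont : Continuous fun s : ℝ => ψ s q :=
    hc.comp (continuous_id.prodMk continuous_const)
  have hnhds : (chartAt (EuclideanSpace ℝ (Fin n)) q).source ∈ nhds (ψ (0 : ℝ) q) := by
    rw [hid]
    exact (chartAt (EuclideanSpace ℝ (Fin n)) q).open_source.mem_nhds (mem_chart_source _ q)
  have hev : (fun s : ℝ => ψ s q) =ᶠ[nhds (0 : ℝ)] fun _ => q := by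
    have := hcont.continuousAt.preimage_mem_nhds hnhds
    filter_upwards [this] with s hs
    exact hfix s hs
  rw [← hX q, hev.mfderiv_eq, mfderiv_const]
  rfl
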